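/- Let π ∈ ℝ^K be a probability vector with all entries positive and P a symmetric K×K matrix with positive entries. Define T_{ab} = π_a π_b P_{ab} / (Σ_{a,b} π_a π_b P_{ab}) and W = T − (T1)(T1)ᵀ. If K = 2 and W_{11} > 0, W_{22} > 0, W_{12} < 0, then P_{11} P_{22} > P_{12}². -/

import Mathlib

/-- For K = 2: positivity of the diagonal of W and negativity off-diagonal imply
P₁₁ P₂₂ > P₁₂². -/
theorem W_signs_imply_det_positive
    (π : Fin 2 → ℝ) (hπpos : ∀ a, 0 < π a) (hπsum : π 0 + π 1 = 1)
    (P : Matrix (Fin 2) (Fin 2) ℝ)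
    (hPsym : ∀ a b, P a b = P b a) (hPpos : ∀ a b, 0 < P a b)
    (S : ℝ) (hS : S = ∑ a, ∑ b, π a * π b * P a b)
    (T : Matrix (Fin 2) (Fin 2) ℝ)
    (hT : ∀ a b, T a b = π a * π b * P a b / S)
    (W : Matrix (Fin 2) (Fin 2) ℝ)
    (hW : ∀ a b, W a b = T a b - (∑ c, T a c) * (∑ c, T b c))
    (hW00 : 0 < W 0 0) (hW11 : 0 < W 1 1) (hW01 : W 0 1 < 0) :
    P 0 1 ^ 2 < P 0 0 * P 1 1 := by
  have h0 := hπpos 0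
  have h1 := hπpos 1
  have hP00 := hPpos 0 0
  have hP01 := hPpos 0 1
  have hP11 := hPpos 1 1
  have hsym := hPsym 1 0
  have hSval : S = π 0 * π 0 * P 0 0 + π 0 * π 1 * P 0 1 + π 1 * π 0 * P 1 0
      + π 1 * π 1 * P 1 1 := by
    rw [hS]
    simp [Fin.sum_univ_two]
    ring
  rw [hsym] at hSval
  have hSpos : 0 < S := by
    rw [hSval]
    positivity
  have hW00' := hW00
  rw [hW 0 0, Fin.sum_univ_two, hT 0 0, hT 0 1] at hW00'
  -- clear denominators
  rw [sub_pos, ← add_div, div_mul_div_comm] at hW00'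
  have key : (π 0 * π 0 * P 0 0 + π 0 * π 1 * P 0 1) ^ 2
      < π 0 * π 0 * P 0 0 * S := by
    have hS2 : 0 < S * S := mul_pos hSpos hSpos
    have := (div_lt_div_iff₀ hS2 hSpos).mp hW00'
    nlinarith [this]
  rw [hSval] at key
  have hab : (0:ℝ) < (π 0 * π 1) ^ 2 := by positivity
  have key2 : (π 0 * π 1) ^ 2 * P 0 1 ^ 2 < (π 0 * π 1) ^ 2 * (P 0 0 * P 1 1) := by
    nlinarith [key]
  exact (mul_lt_mul_iff_right₀ hab).mp key2
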